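/- Let M be a finite possibilistic Kripke structure, s a state, and Φ a set of states. Then: every path π ∈ Paths(s) satisfies ◇Φ (eventually visits Φ) if and only if Po(s ⊨ □(S\Φ)) = 0, i.e., the possibility of the set of paths from s that forever avoid Φ is zero. (The CTL formula ∀◇Φ is equivalent to the PoCTL formula Po_{=0}(□¬Φ).) -/

import Mathlib

open scoped ENNReal

/-- the set of paths of a possibilistic Kripke structure starting at `s`. -/
def PathsFrom {S : Type*} (P : S → S → ℝ≥0∞) (s : S) : Set (ℕ → S) :=
  {π | π 0 = s ∧ ∀ i, 0 < P (π i) (π (i + 1))}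

/-- the possibility `Po(s ⊨ φ)` of the set of paths from `s` satisfying `φ`. -/
noncomputable def PoSat {S : Type*} (P : S → S → ℝ≥0∞) (s : S) (φ : Set (ℕ → S)) : ℝ≥0∞ :=
  ⨆ π ∈ PathsFrom P s ∩ φ, ⨅ i, P (π i) (π (i + 1))

/-- in a finite possibilistic Kripke structure, every path from `s`
eventually visits `Φ` iff the possibility of forever avoiding `Φ` is zero:
`∀◇Φ ≡ Po_{=0}(□¬Φ)`. -/
theorem stmt16 {S : Type*} [Fintype S] (P : S → S → ℝ≥0∞)
    (hP1 : ∀ s t, P s t ≤ 1) (hPn : ∀ s, (⨆ t, P s t) = 1)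
    (s : S) (Φ : Set S) :
    (∀ π ∈ PathsFrom P s, ∃ j, π j ∈ Φ) ↔ PoSat P s {π | ∀ j, π j ∉ Φ} = 0 := by
  constructor
  · intro h
    have hempty : PathsFrom P s ∩ {π : ℕ → S | ∀ j, π j ∉ Φ} = ∅ := by
      ext π
      simp only [Set.mem_inter_iff, Set.mem_setOf_eq, Set.mem_empty_iff_false, iff_false,
        not_and]
      intro hπ havoid
      obtain ⟨j, hj⟩ := h π hπ
      exact havoid j hj
    simp [PoSat, hempty]
  · intro h π hπ
    by_contra hc
    push_neg at hc
    have hmem : π ∈ PathsFrom P s ∩ {π : ℕ → S | ∀ j, π j ∉ Φ} := ⟨hπ, hc⟩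
    have hle : (⨅ i, P (π i) (π (i + 1))) ≤ PoSat P s {π : ℕ → S | ∀ j, π j ∉ Φ} :=
      by rw [PoSat]; exact le_biSup (fun π => ⨅ i, P (π i) (π (i + 1))) hmem
    have hfin : (Set.range fun i => P (π i) (π (i + 1))).Finite :=
      Set.Finite.subset (Set.finite_range fun p : S × S => P p.1 p.2)
        (by rintro _ ⟨i, rfl⟩; exact ⟨(π i, π (i + 1)), rfl⟩)
    have hmemInf : sInf (Set.range fun i => P (π i) (π (i + 1))) ∈
        Set.range fun i => P (π i) (π (i + 1)) :=
      Set.Nonempty.csInf_mem ⟨_, ⟨0, rfl⟩⟩ hfin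
    obtain ⟨i₀, hi₀⟩ := hmemInf
    have hpos : 0 < ⨅ i, P (π i) (π (i + 1)) := by
      rw [iInf, ← hi₀]
      exact hπ.2 i₀
    rw [h] at hle
    exact hpos.ne' (le_antisymm hle zero_le)
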